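/- If a permutation π of size n is not the identity, then the number of inversions of T(π) is strictly smaller than the number of inversions of π. Consequently, for every permutation π of size n there exists m ≤ n(n-1)/2 with T^m(π) = id. -/

import Mathlib

/-- Split a list into maximal strictly decreasing contiguous blocks ("falls"). -/
def fallSplit : List ℕ → List (List ℕ)
  | [] => []
  | a :: rest =>
    match fallSplit rest with
    | (b :: bs) :: gs => if b < a then (a :: b :: bs) :: gs else [a] :: (b :: bs) :: gs
    | gs => [a] :: gs

/-- Split a list into maximal strictly increasing contiguous blocks ("runs"). -/
def runSplit : List ℕ → List (List ℕ)
  | [] => []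
  | a :: rest =>
    match runSplit rest with
    | (b :: bs) :: gs => if a < b then (a :: b :: bs) :: gs else [a] :: (b :: bs) :: gs
    | gs => [a] :: gs

/-- The flip transformation `T`: reverse every fall. -/
def flipT (l : List ℕ) : List ℕ := ((fallSplit l).map List.reverse).flatten

/-- `l` is the one-line notation of a permutation of `{1, …, n}`. -/
def IsPermList (n : ℕ) (l : List ℕ) : Prop := l.Perm (List.range' 1 n)

/-- Every pair of adjacent runs overlaps: `min R₁ < max R₂` (pop-stacked condition). -/
def Overlapping (l : List ℕ) : Prop :=
  ∀ R₁ R₂ : List ℕ, [R₁, R₂] <:+: runSplit l → ∃ a ∈ R₁, ∃ b ∈ R₂, a < b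

/-- The number of inversions of a list. -/
def inversions (l : List ℕ) : ℕ :=
  ((Finset.range l.length ×ˢ Finset.range l.length).filter
    (fun p => p.1 < p.2 ∧ l.getD p.2 0 < l.getD p.1 0)).card

def inv' : List ℕ → ℕ
  | [] => 0
  | a :: t => t.countP (fun x => x < a) + inv' t

lemma countP_eq_sum (t : List ℕ) (p : ℕ → Bool) :
    t.countP p = ∑ j ∈ Finset.range t.length, if p (t.getD j 0) then 1 else 0 := by
  induction t with
  | nil => simp
  | cons a t ih =>
    rw [List.countP_cons]
    simp only [List.length_cons, Finset.sum_range_succ']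
    simp [ih]

lemma inversions_eq_inv' (l : List ℕ) : inversions l = inv' l := by
  induction l with
  | nil => simp [inversions, inv']
  | cons a t ih =>
    rw [inv', ← ih]
    unfold inversions
    rw [Finset.card_filter, Finset.sum_product, List.length_cons]
    rw [Finset.sum_range_succ', Nat.add_comm]
    congr 1
    · rw [countP_eq_sum]
      rw [Finset.sum_range_succ']
      simp
    · rw [Finset.card_filter, Finset.sum_product]
      apply Finset.sum_congr rfl
      intro i _
      rw [Finset.sum_range_succ']
      simp

def cross (a b : List ℕ) : ℕ := (a.map (fun x => b.countP (fun y => y < x))).sum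

lemma inv'_append (a b : List ℕ) : inv' (a ++ b) = inv' a + inv' b + cross a b := by
  induction a with
  | nil => simp [inv', cross]
  | cons x t ih =>
    rw [List.cons_append, inv', inv', List.countP_append, ih]
    simp only [cross, List.map_cons, List.sum_cons]
    ring

lemma cross_perm_left {a a' : List ℕ} (h : a.Perm a') (b : List ℕ) : cross a b = cross a' b :=
  (h.map _).sum_eq

lemma cross_perm_right (a : List ℕ) {b b' : List ℕ} (h : b.Perm b') : cross a b = cross a b' := by
  unfold cross
  congr 1
  apply List.map_congr_left
  intro x _
  exact h.countP_eq _

lemma fallSplit_flatten (l : List ℕ) : (fallSplit l).flatten = l := by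
  induction l with
  | nil => simp [fallSplit]
  | cons a rest ih =>
    rw [fallSplit]
    rcases h : fallSplit rest with _ | ⟨_ | ⟨b, bs⟩, gs⟩ <;>
      simp_all <;> split <;> simp_all

lemma fallSplit_blocks (l : List ℕ) : ∀ B ∈ fallSplit l, B ≠ [] ∧ B.Chain' (· > ·) := by
  induction l with
  | nil => simp [fallSplit]
  | cons a rest ih =>
    rw [fallSplit]
    rcases h : fallSplit rest with _ | ⟨_ | ⟨b, bs⟩, gs⟩ <;> rw [h] at ih
    · simp [List.Chain']
    · exact absurd rfl (ih [] (by simp)).1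
    · simp only []
      split
      · intro B hB
        rw [List.mem_cons] at hB
        rcases hB with rfl | hB
        · exact ⟨by simp, List.IsChain.cons_cons (by assumption) (ih _ (by simp)).2⟩
        · exact ih _ (List.mem_cons_of_mem _ hB)
      · intro B hB
        rw [List.mem_cons] at hB
        rcases hB with rfl | hB
        · simp [List.Chain']
        · exact ih _ hB

lemma inv'_of_pairwise {l : List ℕ} (h : l.Pairwise (· < ·)) : inv' l = 0 := by
  induction l with
  | nil => rfl
  | cons a t ih =>
    rw [List.pairwise_cons] at h
    rw [inv', ih h.2, List.countP_eq_zero.2]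
    intro x hx
    simp only [decide_eq_true_eq]
    exact not_lt.2 (le_of_lt (h.1 x hx))

lemma inv'_reverse_of_chain {B : List ℕ} (h : B.Chain' (· > ·)) : inv' B.reverse = 0 := by
  apply inv'_of_pairwise
  have : B.reverse.Chain' (· < ·) := by
    refine List.isChain_reverse.2 ?_
    exact h
  exact (List.isChain_iff_pairwise).1 this

lemma inv'_pos_of_long {B : List ℕ} (h : B.Chain' (· > ·)) (h2 : 2 ≤ B.length) :
    1 ≤ inv' B := by
  match B, h2 with
  | x :: y :: t, _ =>
    have hxy : y < x := (List.isChain_cons_cons.1 h).1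
    rw [inv']
    have : 1 ≤ (y :: t).countP (fun z => z < x) := by
      rw [Nat.succ_le_iff, List.countP_pos_iff]
      exact ⟨y, by simp, by simpa using hxy⟩
    omega

lemma flatten_map_reverse_perm (Bs : List (List ℕ)) :
    ((Bs.map List.reverse).flatten).Perm Bs.flatten := by
  induction Bs with
  | nil => simp
  | cons B Bs ih =>
    simp only [List.map_cons, List.flatten_cons]
    exact (B.reverse_perm).append ih

lemma inv'_flatten_blocks (Bs : List (List ℕ)) (h : ∀ B ∈ Bs, B.Chain' (· > ·)) :
    inv' Bs.flatten = inv' ((Bs.map List.reverse).flatten) + (Bs.map inv').sum := by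
  induction Bs with
  | nil => simp
  | cons B Bs ih =>
    simp only [List.map_cons, List.flatten_cons, List.sum_cons]
    rw [inv'_append, inv'_append]
    rw [inv'_reverse_of_chain (h B (by simp))]
    rw [cross_perm_left B.reverse_perm, cross_perm_right B (flatten_map_reverse_perm Bs)]
    rw [ih (fun B hB => h B (List.mem_cons_of_mem _ hB))]
    ring

lemma flipT_perm (l : List ℕ) : (flipT l).Perm l := by
  have h := flatten_map_reverse_perm (fallSplit l)
  rw [fallSplit_flatten] at h
  exact h

lemma singletons_sorted (l : List ℕ) (h : ∀ B ∈ fallSplit l, B.length = 1) :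
    l.Chain' (· ≤ ·) := by
  induction l with
  | nil => exact List.isChain_nil
  | cons a rest ih =>
    rcases hr : fallSplit rest with _ | ⟨_ | ⟨b, bs⟩, gs⟩
    · have : rest = [] := by rw [← fallSplit_flatten rest, hr]; rfl
      subst this; exact List.isChain_singleton a
    · exact absurd rfl (fallSplit_blocks rest [] (by rw [hr]; simp)).1
    · have hfa : fallSplit (a :: rest) = if b < a then (a :: b :: bs) :: gs
          else [a] :: (b :: bs) :: gs := by
        rw [fallSplit, hr]
      by_cases hba : b < a
      · exfalso
        have := h (a :: b :: bs) (by rw [hfa, if_pos hba]; simp)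
        simp at this
      · have hrest : rest = b :: (bs ++ gs.flatten) := by
          conv_lhs => rw [← fallSplit_flatten rest, hr]
          simp
        have hch : rest.Chain' (· ≤ ·) := by
          apply ih
          intro B hB
          apply h
          rw [hfa, if_neg hba]
          exact List.mem_cons_of_mem _ (hr ▸ hB)
        rw [hrest] at hch ⊢
        exact List.isChain_cons_cons.2 ⟨not_lt.1 hba, hch⟩

lemma range'_sorted (n : ℕ) : (List.range' 1 n).Pairwise (· ≤ ·) :=
  (List.pairwise_le_range')

lemma eq_range'_of_sorted {n : ℕ} {l : List ℕ} (hp : l.Perm (List.range' 1 n))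
    (hs : l.Chain' (· ≤ ·)) : l = List.range' 1 n :=
  List.Perm.eq_of_pairwise' ((List.isChain_iff_pairwise).1 hs) (range'_sorted n) hp

lemma key_decrease {n : ℕ} {π : List ℕ} (hp : π.Perm (List.range' 1 n))
    (hne : π ≠ List.range' 1 n) : inv' (flipT π) < inv' π := by
  have hsum : inv' π = inv' (flipT π) + ((fallSplit π).map inv').sum := by
    conv_lhs => rw [← fallSplit_flatten π]
    exact inv'_flatten_blocks _ (fun B hB => (fallSplit_blocks π B hB).2)
  have hlong : ∃ B ∈ fallSplit π, 2 ≤ B.length := by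
    by_contra hcon
    push_neg at hcon
    apply hne
    apply eq_range'_of_sorted hp
    apply singletons_sorted
    intro B hB
    have h1 := (fallSplit_blocks π B hB).1
    have h2 := hcon B hB
    have : 1 ≤ B.length := List.length_pos_iff.2 h1
    omega
  obtain ⟨B, hB, hlen⟩ := hlong
  have h1 : 1 ≤ inv' B := inv'_pos_of_long (fallSplit_blocks π B hB).2 hlen
  have hmem : inv' B ∈ (fallSplit π).map inv' := List.mem_map_of_mem hB
  have : 1 ≤ ((fallSplit π).map inv').sum :=
    le_trans h1 (List.single_le_sum (fun x _ => Nat.zero_le x) _ hmem)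
  omega

lemma inv'_le (l : List ℕ) : 2 * inv' l ≤ l.length * (l.length - 1) := by
  induction l with
  | nil => simp [inv']
  | cons a t ih =>
    rw [inv', List.length_cons]
    have hc : t.countP (fun x => x < a) ≤ t.length := List.countP_le_length
    have : t.length * (t.length - 1) + 2 * t.length = (t.length + 1) * (t.length + 1 - 1) := by
      cases t.length with
      | zero => simp
      | succ m => simp only [Nat.add_sub_cancel]; ring
    omega


theorem flipT_inversions_decrease (n : ℕ) :
    (∀ π : List ℕ, IsPermList n π → π ≠ List.range' 1 n →
      inversions (flipT π) < inversions π) ∧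
    (∀ π : List ℕ, IsPermList n π →
      ∃ m ≤ n * (n - 1) / 2, flipT^[m] π = List.range' 1 n) := by
  constructor
  · intro π hp hne
    rw [inversions_eq_inv', inversions_eq_inv']
    exact key_decrease hp hne
  · intro π hp
    have hbound : inv' π ≤ n * (n - 1) / 2 := by
      have h1 := inv'_le π
      have h2 : π.length = n := by
        rw [hp.length_eq, List.length_range']
      rw [h2] at h1
      omega
    suffices h : ∀ k (ρ : List ℕ), inv' ρ ≤ k → ρ.Perm (List.range' 1 n) →
        ∃ m ≤ k, flipT^[m] ρ = List.range' 1 n by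
      obtain ⟨m, hm, he⟩ := h (n * (n - 1) / 2) π hbound hp
      exact ⟨m, hm, he⟩
    intro k
    induction k with
    | zero =>
      intro ρ hk hρ
      refine ⟨0, le_refl 0, ?_⟩
      by_contra hne
      have := key_decrease hρ (by simpa using hne)
      omega
    | succ k ih =>
      intro ρ hk hρ
      by_cases hne : ρ = List.range' 1 n
      · exact ⟨0, Nat.zero_le _, by simpa using hne⟩
      · have hd := key_decrease hρ hne
        obtain ⟨m, hm, he⟩ := ih (flipT ρ) (by omega) ((flipT_perm ρ).trans hρ)
        exact ⟨m + 1, by omega, by rw [Function.iterate_succ_apply]; exact he⟩
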